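/- Let g : ℂ → ℂ be holomorphic on all of ℂ, let D ⊆ ℂ be a bounded open set and U ⊆ ℂ an open set with μ(U) > 0 and with closure(U) ⊆ g(D). Set E = {z ∈ D : g(z) ∈ U}. Assume there are constants M > 0, c > 0 and p ∈ ℕ such that: |g′(z)| ≤ M for all z ∈ D; |g′(z)| ≥ c for all z ∈ D \ E; and every w ∈ ℂ has at most p preimages under g in D. Then μ(D) ≤ μ(E) · (1 + p M² μ(g(D)) / (c² μ(U))). In particular μ(E) ≥ C μ(D) with the constant C = (1 + p M² μ(g(D))/(c² μ(U)))^{−1} > 0 depending only on U, p, M, c and μ(g(D)), and not on the particular set D. -/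

import Mathlib

open MeasureTheory
open Set ENNReal

/-- The determinant of multiplication by a complex number, viewed as a real-linear map,
is `Complex.normSq a`. -/
lemma det_complex_mul (a : ℂ) :
    ((ContinuousLinearMap.smulRight (1 : ℂ →L[ℂ] ℂ) a).restrictScalars ℝ).det
      = Complex.normSq a := by
  have h1 : (((ContinuousLinearMap.smulRight (1 : ℂ →L[ℂ] ℂ) a).restrictScalars ℝ :
      ℂ →L[ℝ] ℂ) : ℂ →ₗ[ℝ] ℂ) = Algebra.lmul ℝ ℂ a := by
    apply LinearMap.ext; intro w
    simp [mul_comm]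
  rw [ContinuousLinearMap.det, h1, ← Algebra.norm_apply, Algebra.norm_complex_apply]

/-- An entire function is injective near any point where its derivative does not vanish. -/
lemma loc_inj {g : ℂ → ℂ} (hg : Differentiable ℂ g) {z : ℂ} (h0 : deriv g z ≠ 0) :
    ∃ s : Set ℂ, IsOpen s ∧ z ∈ s ∧ Set.InjOn g s := by
  obtain ⟨pp, hpp⟩ := hg.analyticAt z
  have hsd : HasStrictDerivAt g (deriv g z) z := by
    rw [hpp.deriv]; exact hpp.hasStrictDerivAt
  have H := hsd.hasStrictFDerivAt_equiv h0
  refine ⟨(H.toOpenPartialHomeomorph g).source, (H.toOpenPartialHomeomorph g).open_source,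
    H.mem_toOpenPartialHomeomorph_source, ?_⟩
  have h2 := (H.toOpenPartialHomeomorph g).injOn
  rwa [H.toOpenPartialHomeomorph_coe] at h2

/-- Planar quantitative version of Lemma 5.2 (unimeas): if `closure U ⊆ g(D)`,
`|g′| ≤ M` on `D`, `|g′| ≥ c` on `D \ E` where `E = {z ∈ D : g z ∈ U}`, and every point
has at most `p` preimages under `g` in `D`, then
`μ(D) ≤ μ(E) (1 + p M² μ(g(D)) / (c² μ(U)))`. -/
theorem definite_fraction_enters_U (g : ℂ → ℂ) (D U : Set ℂ) (M c : ℝ) (p : ℕ)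
    (hg : Differentiable ℂ g)
    (hD : IsOpen D) (hDb : Bornology.IsBounded D)
    (hU : IsOpen U) (hUpos : 0 < volume U)
    (hcl : closure U ⊆ g '' D)
    (hM : 0 < M) (hc : 0 < c)
    (hup : ∀ z ∈ D, ‖deriv g z‖ ≤ M)
    (hlow : ∀ z ∈ D \ {z ∈ D | g z ∈ U}, c ≤ ‖deriv g z‖)
    (hp : ∀ w : ℂ, (D ∩ g ⁻¹' {w}).encard ≤ (p : ℕ∞)) :
    volume D ≤
      ENNReal.ofReal (1 + (p : ℝ) * M ^ 2 * (volume (g '' D)).toReal /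
          (c ^ 2 * (volume U).toReal)) *
        volume {z ∈ D | g z ∈ U} := by
  classical
  set E : Set ℂ := {z ∈ D | g z ∈ U} with hEdef
  have hgc : Continuous g := hg.continuous
  have hEopen : IsOpen E := by
    have h : E = D ∩ g ⁻¹' U := rfl
    rw [h]; exact hD.inter (hU.preimage hgc)
  have hEm : MeasurableSet E := hEopen.measurableSet
  have hDm : MeasurableSet D := hD.measurableSet
  have hED : E ⊆ D := fun z hz => hz.1
  -- the real derivative of `g` and its determinant
  set F : ℂ → (ℂ →L[ℝ] ℂ) :=
    fun z => (ContinuousLinearMap.smulRight (1 : ℂ →L[ℂ] ℂ) (deriv g z)).restrictScalars ℝ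
    with hFdef
  have hfd : ∀ z, HasFDerivAt g (F z) z :=
    fun z => ((hg z).hasDerivAt.hasFDerivAt).restrictScalars ℝ
  have hdet : ∀ z, ENNReal.ofReal |(F z).det| = ENNReal.ofReal (‖deriv g z‖ ^ 2) := by
    intro z
    congr 1
    rw [hFdef]
    rw [det_complex_mul, abs_of_nonneg (Complex.normSq_nonneg _), Complex.normSq_eq_norm_sq]
  -- finiteness of the relevant measures
  have hgDfin : volume (g '' D) ≠ ⊤ := by
    have hK : IsCompact (g '' closure D) := hDb.isCompact_closure.image hgc
    exact ne_top_of_le_ne_top hK.measure_lt_top.ne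
      (measure_mono (fun _ ⟨x, hx, e⟩ => ⟨x, subset_closure hx, e⟩))
  have hDfin : volume D ≠ ⊤ := by
    have hK : IsCompact (closure D) := hDb.isCompact_closure
    exact ne_top_of_le_ne_top hK.measure_lt_top.ne (measure_mono subset_closure)
  have hEfin : volume E ≠ ⊤ := ne_top_of_le_ne_top hDfin (measure_mono hED)
  have hUfin : volume U ≠ ⊤ :=
    ne_top_of_le_ne_top hgDfin (measure_mono (subset_closure.trans hcl))
  -- Step A : μ U ≤ M² μ E
  have hUE : U ⊆ g '' E := by
    intro w hw
    obtain ⟨z, hzD, hzw⟩ := hcl (subset_closure hw)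
    exact ⟨z, ⟨hzD, by rw [hzw]; exact hw⟩, hzw⟩
  have stepA : volume U ≤ ENNReal.ofReal (M ^ 2) * volume E := by
    calc volume U ≤ volume (g '' E) := measure_mono hUE
      _ ≤ ∫⁻ z in E, ENNReal.ofReal |(F z).det| :=
          addHaar_image_le_lintegral_abs_det_fderiv volume hEm
            (fun z _ => (hfd z).hasFDerivWithinAt)
      _ ≤ ∫⁻ _ in E, ENNReal.ofReal (M ^ 2) := by
          refine setLIntegral_mono measurable_const fun z hz => ?_
          rw [hdet z]
          exact ENNReal.ofReal_le_ofReal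
            (pow_le_pow_left₀ (norm_nonneg _) (hup z (hED hz)) 2)
      _ = ENNReal.ofReal (M ^ 2) * volume E := setLIntegral_const _ _
  -- Step B : c² μ (D \ E) ≤ p μ (g '' D)
  have stepB : ENNReal.ofReal (c ^ 2) * volume (D \ E) ≤
      (p : ℝ≥0∞) * volume (g '' D) := by
    set A : Set ℂ := D \ E with hAdef
    rcases A.eq_empty_or_nonempty with hA | hA
    · rw [hA]; simp
    -- countable cover of `A` by open sets on which `g` is injective
    have hcov : ∀ z : A, ∃ s : Set ℂ, IsOpen s ∧ (z : ℂ) ∈ s ∧ s ⊆ D ∧ Set.InjOn g s := by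
      rintro ⟨z, hz⟩
      have h0 : deriv g z ≠ 0 := by
        have h1 := hlow z hz
        intro h; rw [h, norm_zero] at h1; linarith
      obtain ⟨s, hso, hzs, hinj⟩ := loc_inj hg h0
      exact ⟨s ∩ D, hso.inter hD, ⟨hzs, hz.1⟩, inter_subset_right,
        hinj.mono inter_subset_left⟩
    choose t hto htz htD htinj using hcov
    obtain ⟨T, hTc, hTeq⟩ := TopologicalSpace.isOpen_iUnion_countable t (fun i => hto i)
    have hTne : T.Nonempty := by
      rcases hA with ⟨z, hz⟩
      by_contra h
      rw [Set.not_nonempty_iff_eq_empty] at h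
      have h2 : (z : ℂ) ∈ ⋃ i, t i := Set.mem_iUnion.2 ⟨⟨z, hz⟩, htz ⟨z, hz⟩⟩
      rw [← hTeq, h] at h2
      simp at h2
    obtain ⟨f, hf⟩ := hTc.exists_eq_range hTne
    set s : ℕ → Set ℂ := fun n => t (f n) with hsdef
    have hAsub : A ⊆ ⋃ n, s n := by
      intro z hz
      have h1 : z ∈ ⋃ i, t i := Set.mem_iUnion.2 ⟨⟨z, hz⟩, htz ⟨z, hz⟩⟩
      rw [← hTeq, hf] at h1
      simpa [s] using h1
    set B : ℕ → Set ℂ := fun n => A ∩ disjointed s n with hBdef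
    have hBm : ∀ n, MeasurableSet (B n) :=
      fun n => (hDm.diff hEm).inter (MeasurableSet.disjointed
        (fun m => (hto (f m)).measurableSet) n)
    have hBsub : ∀ n, B n ⊆ s n := fun n => inter_subset_right.trans (disjointed_subset _ _)
    have hBA : ∀ n, B n ⊆ A := fun n => inter_subset_left
    have hBdisj : Pairwise (Function.onFun Disjoint B) := fun m n hmn =>
      ((disjoint_disjointed s hmn).mono inter_subset_right inter_subset_right)
    have hAeq : A = ⋃ n, B n := by
      rw [hBdef]
      rw [← Set.inter_iUnion, iUnion_disjointed]
      exact (Set.inter_eq_self_of_subset_left hAsub).symm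
    have hBinj : ∀ n, Set.InjOn g (B n) := fun n => (htinj (f n)).mono (hBsub n)
    have hBD : ∀ n, B n ⊆ D := fun n => (hBsub n).trans (htD (f n))
    -- change of variables on each piece
    have key : ∀ n, ENNReal.ofReal (c ^ 2) * volume (B n) ≤ volume (g '' B n) := by
      intro n
      rw [← lintegral_abs_det_fderiv_eq_addHaar_image volume (hBm n)
        (fun z _ => (hfd z).hasFDerivWithinAt) (hBinj n)]
      calc ENNReal.ofReal (c ^ 2) * volume (B n) = ∫⁻ _ in B n, ENNReal.ofReal (c ^ 2) :=
            (setLIntegral_const _ _).symm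
        _ ≤ ∫⁻ z in B n, ENNReal.ofReal |(F z).det| := by
            refine setLIntegral_mono' (hBm n) fun z hz => ?_
            rw [hdet z]
            exact ENNReal.ofReal_le_ofReal
              (pow_le_pow_left₀ hc.le (hlow z (hBA n hz)) 2)
    -- the images have bounded overlap `p`
    have himg_meas : ∀ n, MeasurableSet (g '' B n) :=
      fun n => (hBm n).image_of_continuousOn_injOn hgc.continuousOn (hBinj n)
    set T' := toMeasurable volume (g '' D) with hT'def
    have hsum : ∑' n, volume (g '' B n) ≤ (p : ℝ≥0∞) * volume (g '' D) := by
      have hpt : ∀ w : ℂ, ∑' n, (g '' B n).indicator (1 : ℂ → ℝ≥0∞) w ≤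
          T'.indicator (fun _ => (p : ℝ≥0∞)) w := by
        intro w
        set S : Set ℕ := {n | w ∈ g '' B n} with hSdef
        have heq : ∀ n, (g '' B n).indicator (1 : ℂ → ℝ≥0∞) w
            = S.indicator (fun _ => (1 : ℝ≥0∞)) n := by
          intro n
          by_cases h : n ∈ S
          · rw [Set.indicator_of_mem h, Set.indicator_of_mem (by exact h)]; rfl
          · rw [Set.indicator_of_notMem h, Set.indicator_of_notMem (by exact h)]
        rcases S.eq_empty_or_nonempty with hS | hS
        · simp only [heq, hS]
          simp
        · have hwT : w ∈ T' := by
            obtain ⟨n, hn⟩ := hS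
            obtain ⟨z, hz, hzw⟩ := hn
            exact subset_toMeasurable _ _ ⟨z, hBD n hz, hzw⟩
          have hScard : S.encard ≤ (p : ℕ∞) := by
            have hch : ∀ n ∈ S, ∃ z, z ∈ B n ∧ g z = w := fun n hn => by
              obtain ⟨z, hz, hzw⟩ := hn; exact ⟨z, hz, hzw⟩
            choose zf hzf hzw using hch
            set zf' : ℕ → ℂ := fun n => if hn : n ∈ S then zf n hn else 0 with hzf'
            refine le_trans (Set.encard_le_encard_of_injOn (f := zf')
              (t := D ∩ g ⁻¹' {w}) ?_ ?_) (hp w)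
            · intro n hn
              simp only [zf', dif_pos hn]
              exact ⟨hBD n (hzf n hn), hzw n hn⟩
            · intro m hm n hn hmn
              simp only [zf', dif_pos hm, dif_pos hn] at hmn
              by_contra hne
              exact (Set.disjoint_left.1 (hBdisj hne)) (hzf m hm) (hmn ▸ hzf n hn)
          calc ∑' n, (g '' B n).indicator (1 : ℂ → ℝ≥0∞) w
              = ∑' n, S.indicator (fun _ => (1 : ℝ≥0∞)) n := by simp only [heq]
            _ = ∑' (_ : S), (1 : ℝ≥0∞) := (tsum_subtype S fun _ => 1).symm
            _ = S.encard := ENNReal.tsum_set_one S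
            _ ≤ ((p : ℕ∞) : ℝ≥0∞) := by exact_mod_cast ENat.toENNReal_le.2 hScard
            _ = T'.indicator (fun _ => (p : ℝ≥0∞)) w := by
                rw [Set.indicator_of_mem hwT]; simp
      calc ∑' n, volume (g '' B n)
          = ∑' n, ∫⁻ w, (g '' B n).indicator (1 : ℂ → ℝ≥0∞) w := by
            congr 1; ext n; rw [lintegral_indicator_one (himg_meas n)]
        _ = ∫⁻ w, ∑' n, (g '' B n).indicator (1 : ℂ → ℝ≥0∞) w :=
            (lintegral_tsum fun n =>
              ((measurable_one.indicator (himg_meas n)).aemeasurable)).symm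
        _ ≤ ∫⁻ w, T'.indicator (fun _ => (p : ℝ≥0∞)) w := lintegral_mono hpt
        _ = (p : ℝ≥0∞) * volume T' :=
            lintegral_indicator_const (measurableSet_toMeasurable _ _) _
        _ = (p : ℝ≥0∞) * volume (g '' D) := by rw [measure_toMeasurable]
    calc ENNReal.ofReal (c ^ 2) * volume A
        ≤ ENNReal.ofReal (c ^ 2) * ∑' n, volume (B n) := by
          rw [hAeq]
          gcongr; exact measure_iUnion_le B
      _ = ∑' n, ENNReal.ofReal (c ^ 2) * volume (B n) := ENNReal.tsum_mul_left.symm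
      _ ≤ ∑' n, volume (g '' B n) := ENNReal.tsum_le_tsum key
      _ ≤ (p : ℝ≥0∞) * volume (g '' D) := hsum
  -- final arithmetic
  have hAfin : volume (D \ E) ≠ ⊤ := ne_top_of_le_ne_top hDfin (measure_mono diff_subset)
  set u := (volume U).toReal with hu_def
  set e := (volume E).toReal with he_def
  set a := (volume (D \ E)).toReal with ha_def
  set m := (volume (g '' D)).toReal with hm_def
  have hu : 0 < u := ENNReal.toReal_pos hUpos.ne' hUfin
  have hm0 : 0 ≤ m := ENNReal.toReal_nonneg
  have ha0 : 0 ≤ a := ENNReal.toReal_nonneg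
  have he0 : 0 ≤ e := ENNReal.toReal_nonneg
  have hA' : u ≤ M ^ 2 * e := by
    have h2 : ENNReal.ofReal (M ^ 2) * volume E ≠ ⊤ :=
      ENNReal.mul_ne_top ENNReal.ofReal_ne_top hEfin
    have h3 := ENNReal.toReal_mono h2 stepA
    rwa [ENNReal.toReal_mul, ENNReal.toReal_ofReal (by positivity)] at h3
  have hB' : c ^ 2 * a ≤ (p : ℝ) * m := by
    have h2 : (p : ℝ≥0∞) * volume (g '' D) ≠ ⊤ :=
      ENNReal.mul_ne_top (by simp) hgDfin
    have h3 := ENNReal.toReal_mono h2 stepB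
    rwa [ENNReal.toReal_mul, ENNReal.toReal_mul, ENNReal.toReal_ofReal (by positivity),
      ENNReal.toReal_natCast] at h3
  have hd : (volume D).toReal ≤ e + a := by
    have h1 : volume D ≤ volume E + volume (D \ E) := by
      calc volume D = volume (E ∪ D \ E) := by rw [Set.union_diff_cancel hED]
        _ ≤ volume E + volume (D \ E) := measure_union_le _ _
    have h3 := ENNReal.toReal_mono (ENNReal.add_ne_top.2 ⟨hEfin, hAfin⟩) h1
    rwa [ENNReal.toReal_add hEfin hAfin] at h3
  have hcu : 0 < c ^ 2 * u := mul_pos (pow_pos hc 2) hu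
  have hreal : (volume D).toReal ≤ (1 + (p : ℝ) * M ^ 2 * m / (c ^ 2 * u)) * e := by
    have hae : a ≤ (p : ℝ) * M ^ 2 * m / (c ^ 2 * u) * e := by
      rw [div_mul_eq_mul_div, le_div_iff₀ hcu]
      have h1 := mul_le_mul_of_nonneg_right hB' hu.le
      have h2 := mul_le_mul_of_nonneg_left hA'
        (mul_nonneg (Nat.cast_nonneg p) hm0)
      nlinarith
    nlinarith
  calc volume D = ENNReal.ofReal ((volume D).toReal) := (ENNReal.ofReal_toReal hDfin).symm
    _ ≤ ENNReal.ofReal ((1 + (p : ℝ) * M ^ 2 * m / (c ^ 2 * u)) * e) :=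
        ENNReal.ofReal_le_ofReal hreal
    _ = ENNReal.ofReal (1 + (p : ℝ) * M ^ 2 * m / (c ^ 2 * u)) * ENNReal.ofReal e :=
        ENNReal.ofReal_mul (by positivity)
    _ = ENNReal.ofReal (1 + (p : ℝ) * M ^ 2 * m / (c ^ 2 * u)) * volume E := by
        rw [he_def, ENNReal.ofReal_toReal hEfin]
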